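/- Let f be the CDF of N(0, σ²). Then sup_{|x|≤α} |f'(x)|/(f(x)(1-f(x))) ≤ 8(α + σ)/σ². -/

import Mathlib

open Real MeasureTheory Set intervalIntegral

noncomputable def stdNormalPDF (t : ℝ) : ℝ := (Real.sqrt (2 * Real.pi))⁻¹ * Real.exp (-t ^ 2 / 2)

noncomputable def stdNormalCDF (x : ℝ) : ℝ := ∫ t in Set.Iic x, stdNormalPDF t

lemma pdf_pos (t : ℝ) : 0 < stdNormalPDF t := by
  unfold stdNormalPDF
  have := Real.pi_pos
  positivity

lemma pdf_cont : Continuous stdNormalPDF := by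
  unfold stdNormalPDF; fun_prop

lemma integrable_pdf : Integrable stdNormalPDF := by
  have h : stdNormalPDF = fun t => (Real.sqrt (2 * Real.pi))⁻¹ * Real.exp (-(1/2) * t ^ 2) := by
    funext t; unfold stdNormalPDF; ring_nf
  rw [h]
  exact (integrable_exp_neg_mul_sq (by norm_num)).const_mul _

lemma integral_pdf : ∫ t, stdNormalPDF t = 1 := by
  have h : ∫ t : ℝ, Real.exp (-(1/2) * t ^ 2) = Real.sqrt (2 * Real.pi) := by
    rw [integral_gaussian]
    norm_num [mul_comm]
  have h2 : ∫ t, stdNormalPDF t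
      = (Real.sqrt (2 * Real.pi))⁻¹ * ∫ t : ℝ, Real.exp (-(1/2) * t ^ 2) := by
    rw [← MeasureTheory.integral_const_mul]
    congr 1; funext t; unfold stdNormalPDF; ring_nf
  rw [h2, h, inv_mul_cancel₀]
  have := Real.pi_pos
  positivity

lemma cdf_sub (a b : ℝ) :
    stdNormalCDF b - stdNormalCDF a = ∫ t in a..b, stdNormalPDF t := by
  unfold stdNormalCDF
  rw [intervalIntegral.integral_Iic_sub_Iic (f := stdNormalPDF) (μ := volume)
    integrable_pdf.integrableOn integrable_pdf.integrableOn]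

lemma cdf_lt_cdf {a b : ℝ} (hab : a < b) : stdNormalCDF a < stdNormalCDF b := by
  have h : 0 < ∫ t in a..b, stdNormalPDF t := by
    apply intervalIntegral.intervalIntegral_pos_of_pos_on
      (pdf_cont.intervalIntegrable a b) (fun x _ => pdf_pos x) hab
  have := cdf_sub a b
  linarith

lemma cdf_mono {a b : ℝ} (hab : a ≤ b) : stdNormalCDF a ≤ stdNormalCDF b := by
  rcases eq_or_lt_of_le hab with h | h
  · rw [h]
  · exact (cdf_lt_cdf h).le

lemma cdf_nonneg (x : ℝ) : 0 ≤ stdNormalCDF x :=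
  setIntegral_nonneg measurableSet_Iic (fun t _ => (pdf_pos t).le)

lemma cdf_le_one (x : ℝ) : stdNormalCDF x ≤ 1 := by
  rw [← integral_pdf]
  exact setIntegral_le_integral integrable_pdf
    (Filter.Eventually.of_forall fun t => (pdf_pos t).le)

lemma cdf_pos (x : ℝ) : 0 < stdNormalCDF x :=
  lt_of_le_of_lt (cdf_nonneg (x - 1)) (cdf_lt_cdf (by linarith))

lemma cdf_lt_one (x : ℝ) : stdNormalCDF x < 1 :=
  lt_of_lt_of_le (cdf_lt_cdf (show x < x + 1 by linarith)) (cdf_le_one (x + 1))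

lemma pdf_even (t : ℝ) : stdNormalPDF (-t) = stdNormalPDF t := by
  unfold stdNormalPDF; ring_nf

lemma cdf_neg (x : ℝ) : stdNormalCDF (-x) = 1 - stdNormalCDF x := by
  have h1 : stdNormalCDF (-x) = ∫ t in Set.Ioi x, stdNormalPDF t := by
    have := integral_comp_neg_Iic (-x) stdNormalPDF
    rw [neg_neg] at this
    rw [stdNormalCDF, ← this]
    congr 1; funext t; rw [pdf_even]
  have h3 : stdNormalCDF x + ∫ t in Set.Ioi x, stdNormalPDF t = 1 := by
    rw [stdNormalCDF, integral_Iic_add_Ioi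
      integrable_pdf.integrableOn integrable_pdf.integrableOn, integral_pdf]
  rw [h1]; linarith

lemma hasDerivAt_cdf (x : ℝ) : HasDerivAt stdNormalCDF (stdNormalPDF x) x := by
  have h : stdNormalCDF = fun u => stdNormalCDF 0 + ∫ t in (0:ℝ)..u, stdNormalPDF t := by
    funext u
    have := cdf_sub 0 u
    linarith
  rw [h]
  exact ((pdf_cont.integral_hasStrictDerivAt 0 x).hasDerivAt).const_add _

lemma half_le_cdf {t : ℝ} (ht : 0 ≤ t) : 1/2 ≤ stdNormalCDF t := by
  have h0 : stdNormalCDF 0 = 1/2 := by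
    have := cdf_neg 0
    rw [neg_zero] at this
    linarith
  calc (1:ℝ)/2 = stdNormalCDF 0 := h0.symm
    _ ≤ stdNormalCDF t := cdf_mono ht

lemma pdf_antitone {a b : ℝ} (ha : 0 ≤ a) (hab : a ≤ b) :
    stdNormalPDF b ≤ stdNormalPDF a := by
  unfold stdNormalPDF
  have hb : -b ^ 2 / 2 ≤ -a ^ 2 / 2 := by nlinarith
  have := Real.pi_pos
  have h := Real.exp_le_exp.mpr hb
  have hpos : (0:ℝ) < (Real.sqrt (2 * Real.pi))⁻¹ := by positivity
  nlinarith [Real.exp_pos (-b ^ 2 / 2)]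

lemma key {t : ℝ} (ht : 0 ≤ t) :
    stdNormalPDF t ≤ 4 * (t + 1) * (1 - stdNormalCDF t) := by
  set c : ℝ := 1 / (2 * (t + 1)) with hc
  have hc0 : 0 < c := by positivity
  have h1 : 1 - stdNormalCDF t ≥ stdNormalCDF (t + c) - stdNormalCDF t := by
    have := cdf_le_one (t + c); linarith
  have h2 : stdNormalCDF (t + c) - stdNormalCDF t ≥ c * stdNormalPDF (t + c) := by
    rw [cdf_sub]
    have : ∫ s in t..(t + c), stdNormalPDF (t + c) ≤ ∫ s in t..(t+c), stdNormalPDF s := by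
      apply intervalIntegral.integral_mono_on (by linarith)
        (intervalIntegrable_const) (pdf_cont.intervalIntegrable _ _)
      intro s hs
      exact pdf_antitone (le_trans ht hs.1) hs.2
    simpa using this
  have h3 : stdNormalPDF (t + c) ≥ stdNormalPDF t / 2 := by
    unfold stdNormalPDF
    have hexp : Real.exp (-(t + c) ^ 2 / 2) ≥ Real.exp (-t ^ 2 / 2) / 2 := by
      have hbound : -(t + c) ^ 2 / 2 ≥ -t ^ 2 / 2 - 5/8 := by
        have htc : t * c ≤ 1/2 := by
          rw [hc]
          rw [mul_one_div, div_le_div_iff₀ (by linarith) (by norm_num)]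
          linarith
        have hc2 : c ^ 2 / 2 ≤ 1/8 := by
          rw [hc]
          have h1 : (1:ℝ) ≤ 2 * (t + 1) := by linarith
          have : (1 / (2 * (t + 1))) ≤ 1/2 := by
            rw [div_le_div_iff₀ (by linarith) (by norm_num)]; linarith
          nlinarith [hc0]
        nlinarith
      calc Real.exp (-(t + c) ^ 2 / 2) ≥ Real.exp (-t ^ 2 / 2 - 5/8) :=
            Real.exp_le_exp.mpr hbound
        _ = Real.exp (-t ^ 2 / 2) * Real.exp (-(5/8)) := by
            rw [← Real.exp_add]; ring_nf
        _ ≥ Real.exp (-t ^ 2 / 2) / 2 := by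
            have hlog : Real.exp (-(5/8 : ℝ)) ≥ 1/2 := by
              rw [ge_iff_le, show (1/2 : ℝ) = (2 : ℝ)⁻¹ by norm_num,
                ← Real.exp_log (show (0:ℝ) < 2 by norm_num), ← Real.exp_neg,
                Real.exp_le_exp, neg_le_neg_iff]
              have := Real.log_two_gt_d9
              linarith
            nlinarith [Real.exp_pos (-t ^ 2 / 2)]
    have hpos : (0:ℝ) < (Real.sqrt (2 * Real.pi))⁻¹ := by
      have := Real.pi_pos; positivity
    nlinarith
  have hcval : c * (4 * (t + 1)) = 2 := by
    rw [hc]; field_simp; ring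
  have hφ := pdf_pos t
  -- 1 - cdf t ≥ c * φ(t)/2, and c * 4(t+1) = 2
  have h4 : 1 - stdNormalCDF t ≥ c * (stdNormalPDF t / 2) := by nlinarith
  nlinarith [hc0]

lemma ratio (t : ℝ) :
    stdNormalPDF t ≤ 8 * (|t| + 1) * (stdNormalCDF t * (1 - stdNormalCDF t)) := by
  rcases le_or_gt 0 t with ht | ht
  · rw [abs_of_nonneg ht]
    have h1 := key ht
    have h2 := half_le_cdf ht
    have h3 := cdf_lt_one t
    nlinarith [pdf_pos t]
  · rw [abs_of_neg ht]
    have ht' : 0 ≤ -t := by linarith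
    have h1 := key ht'
    have h2 := half_le_cdf ht'
    rw [cdf_neg, pdf_even] at *
    have h3 := cdf_pos t
    nlinarith [pdf_pos t]

/-- For `f` the CDF of `N(0, σ²)`: `sup_{|x| ≤ α} |f'(x)|/(f(x)(1 - f(x))) ≤ 8(α + σ)/σ²`. -/
theorem stmt10 (σ α : ℝ) (hσ : 0 < σ) (hα : 0 < α)
    (f : ℝ → ℝ) (hf : ∀ x, f x = stdNormalCDF (x / σ)) :
    ∀ x, |x| ≤ α → |deriv f x| / (f x * (1 - f x)) ≤ 8 * (α + σ) / σ ^ 2 := by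
  intro x hx
  have hfe : f = fun x => stdNormalCDF (x / σ) := funext hf
  set t : ℝ := x / σ with htdef
  have hder : HasDerivAt f (stdNormalPDF t * (1 / σ)) x := by
    rw [hfe]
    have h1 : HasDerivAt (fun x : ℝ => x / σ) (1 / σ) x := by
      simpa using (hasDerivAt_id x).div_const σ
    exact (hasDerivAt_cdf t).comp x h1
  have hderiv : deriv f x = stdNormalPDF t / σ := by
    rw [hder.deriv]; ring
  have hD : 0 < stdNormalCDF t * (1 - stdNormalCDF t) := by
    have := cdf_pos t
    have := cdf_lt_one t
    nlinarith
  rw [hderiv, hf x, abs_of_pos (div_pos (pdf_pos t) hσ)]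
  rw [div_le_div_iff₀ (by exact hD) (by positivity)]
  have hr := ratio t
  have htabs : |t| * σ = |x| := by
    rw [htdef, abs_div, abs_of_pos hσ]
    field_simp
  -- goal : stdNormalPDF t / σ * σ ^ 2 ≤ 8 * (α + σ) * (cdf t * (1 - cdf t))
  have hσ2 : stdNormalPDF t / σ * σ ^ 2 = stdNormalPDF t * σ := by
    field_simp
  rw [hσ2]
  have habs : |t| + 1 ≤ (α + σ) / σ := by
    rw [le_div_iff₀ hσ]
    have : |x| ≤ α := hx
    nlinarith [abs_nonneg t]
  calc stdNormalPDF t * σ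
      ≤ 8 * (|t| + 1) * (stdNormalCDF t * (1 - stdNormalCDF t)) * σ := by
        nlinarith
    _ ≤ 8 * ((α + σ) / σ) * (stdNormalCDF t * (1 - stdNormalCDF t)) * σ := by
        nlinarith [mul_le_mul_of_nonneg_right habs (mul_nonneg hD.le hσ.le)]
    _ = 8 * (α + σ) * (stdNormalCDF t * (1 - stdNormalCDF t)) := by
        field_simp
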